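/- Let G be a set of square-integrable measurable real functions on a probability space, Ĝ the set of square-integrable measurable functions g such that some sequence (g_n) in G satisfies [g_n] → [g] in L^2(μ), and B := σ(G). Then B ⊆ σ(Ĝ) ⊆ B̂, where B̂ is the augmentation of B by μ-trivial events. -/

import Mathlib

open MeasureTheory

/-- The μ-trivial events: measurable sets of measure 0 or 1. -/
def trivialSets {Ω : Type*} (m₀ : MeasurableSpace Ω) (μ : @Measure Ω m₀) : Set (Set Ω) :=
  {t | MeasurableSet[m₀] t ∧ (μ t = 0 ∨ μ t = 1)}

/-- `B_∩ := {B ∩ T : B ∈ B, T ∈ T}` for a sub-σ-algebra `m`. -/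
def interSets {Ω : Type*} (m₀ : MeasurableSpace Ω) (μ : @Measure Ω m₀)
    (m : MeasurableSpace Ω) : Set (Set Ω) :=
  {s | ∃ b t, MeasurableSet[m] b ∧ t ∈ trivialSets m₀ μ ∧ s = b ∩ t}

/-- The augmentation `B̂ := σ(B_∩)` of a sub-σ-algebra by the μ-trivial events. -/
def aug {Ω : Type*} (m₀ : MeasurableSpace Ω) (μ : @Measure Ω m₀)
    (m : MeasurableSpace Ω) : MeasurableSpace Ω :=
  MeasurableSpace.generateFrom (interSets m₀ μ m)

/-- Let `G` be a set of square-integrable measurable real functions, `Ĝ` the set of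
square-integrable measurable functions that are `L²(μ)`-limits of sequences from `G`, and
`B := σ(G)`. Then `B ⊆ σ(Ĝ) ⊆ B̂`. -/
theorem stmt8 {Ω : Type*} [m₀ : MeasurableSpace Ω] (μ : Measure Ω) [IsProbabilityMeasure μ]
    (G : Set (Ω → ℝ)) (hG : ∀ g ∈ G, Measurable g ∧ MemLp g 2 μ)
    (Ghat : Set (Ω → ℝ))
    (hGhat : Ghat = {g | Measurable g ∧ MemLp g 2 μ ∧
      ∃ u : ℕ → Ω → ℝ, (∀ n, u n ∈ G) ∧
        Filter.Tendsto (fun n => eLpNorm (u n - g) 2 μ) Filter.atTop (nhds 0)}) :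
    (⨆ g ∈ G, MeasurableSpace.comap g inferInstance) ≤
        (⨆ g ∈ Ghat, MeasurableSpace.comap g inferInstance) ∧
      (⨆ g ∈ Ghat, MeasurableSpace.comap g inferInstance) ≤
        aug m₀ μ (⨆ g ∈ G, MeasurableSpace.comap g inferInstance) := by
  constructor
  · -- G ⊆ Ghat
    refine iSup₂_le fun g hg => ?_
    have hmem : g ∈ Ghat := by
      rw [hGhat]
      refine ⟨(hG g hg).1, (hG g hg).2, fun _ => g, fun _ => hg, ?_⟩
      simp only [sub_self, eLpNorm_zero]
      exact tendsto_const_nhds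
    exact le_iSup₂ (f := fun g (_ : g ∈ Ghat) => MeasurableSpace.comap g inferInstance) g hmem
  · refine iSup₂_le fun g hg => ?_
    rw [hGhat] at hg
    obtain ⟨hgm, hgL2, u, huG, hconv⟩ := hg
    obtain ⟨B, hB⟩ : ∃ B : MeasurableSpace Ω,
        B = ⨆ g ∈ G, MeasurableSpace.comap g inferInstance := ⟨_, rfl⟩
    rw [← hB]
    have hBle : B ≤ m₀ := by
      rw [hB]
      exact iSup₂_le fun g hg => measurable_iff_comap_le.mp (hG g hg).1
    -- each u n is B-measurable
    have huB : ∀ n, Measurable[B] (u n) := by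
      intro n
      rw [measurable_iff_comap_le, hB]
      exact le_iSup₂ (f := fun g (_ : g ∈ G) => MeasurableSpace.comap g inferInstance)
        (u n) (huG n)
    have huM : ∀ n, Measurable[m₀] (u n) := fun n => (hG (u n) (huG n)).1
    -- L² convergence → convergence in measure → a.e. convergence along a subsequence
    have hTIM : TendstoInMeasure μ u Filter.atTop g :=
      tendstoInMeasure_of_tendsto_eLpNorm (p := 2) two_ne_zero
        (fun n => (huM n).aestronglyMeasurable) hgm.aestronglyMeasurable hconv
    obtain ⟨ns, -, hae⟩ := hTIM.exists_seq_tendsto_ae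
    -- B-measurable version of g
    obtain ⟨g', hg'⟩ : ∃ g' : Ω → ℝ,
        g' = fun x => Filter.limsup (fun i => u (ns i) x) Filter.atTop := ⟨_, rfl⟩
    have hg'B : Measurable[B] g' := hg' ▸ Measurable.limsup (fun i => huB (ns i))
    have hg'M : Measurable[m₀] g' := hg'B.mono hBle le_rfl
    have hgg' : g =ᵐ[μ] g' := by
      filter_upwards [hae] with x hx
      rw [hg']
      exact (hx.limsup_eq).symm
    -- the exceptional set
    obtain ⟨N, hN⟩ : ∃ N : Set Ω, N = {x | g x ≠ g' x} := ⟨_, rfl⟩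
    have hNmeas : MeasurableSet[m₀] N :=
      hN ▸ (measurableSet_eq_fun hgm hg'M).compl
    have hNnull : μ N = 0 := hN ▸ hgg'
    have hsub : {x | g x ≠ g' x} ⊆ N := hN ▸ subset_rfl
    -- any m₀-measurable null set is aug-measurable
    have hnull_aug : ∀ s : Set Ω, MeasurableSet[m₀] s → μ s = 0 →
        MeasurableSet[aug m₀ μ B] s := fun s hs hs0 =>
      MeasurableSpace.measurableSet_generateFrom
        ⟨Set.univ, s, MeasurableSet.univ, ⟨hs, Or.inl hs0⟩, (Set.univ_inter s).symm⟩
    have hB_aug : ∀ s : Set Ω, MeasurableSet[B] s → MeasurableSet[aug m₀ μ B] s :=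
      fun s hs => MeasurableSpace.measurableSet_generateFrom
        ⟨s, Set.univ, hs, ⟨MeasurableSet.univ, Or.inr measure_univ⟩, (Set.inter_univ s).symm⟩
    intro s hs
    obtain ⟨t, ht, rfl⟩ := hs
    -- decompose g ⁻¹' t
    have hdecomp : g ⁻¹' t = (g' ⁻¹' t \ N) ∪ (g ⁻¹' t ∩ N) := by
      ext x
      by_cases hx : x ∈ N
      · simp [hx]
      · have hxe : g x = g' x := by
          by_contra h
          exact hx (hsub h)
        simp [hx, Set.mem_preimage, hxe]
    rw [hdecomp]
    refine MeasurableSet.union ?_ ?_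
    · exact MeasurableSet.diff (hB_aug _ (hg'B ht)) (hnull_aug N hNmeas hNnull)
    · exact hnull_aug _ (MeasurableSet.inter (hgm ht) hNmeas)
        (measure_mono_null Set.inter_subset_right hNnull)
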